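/- arXiv:2206.08594 — 2 statements merged into one kernel-verified Lean document; each statement's English description precedes it below -/
import Mathlib

section
/- Assume 0 < ε < c1·c2·(μ2 − μ1)/(c1·μ1 + c2·μ2). Then E_ε is strictly increasing on [ω_(ε,1), ∞): for all real ω_(ε,1) ≤ ω < ω', one has E_ε(ω) < E_ε(ω'). -/
/-- Relaxed iteration count of a single task with constant `c`, eigenvalue `μ`,
contraction factor `lam`, at initial-guess coefficient `ω`. -/
noncomputable def Leps (ε c μ lam ω : ℝ) : ℝ :=
  if ω * μ = 1 then 0
  else max 0 (Real.log (ε / (c * |ω * μ - 1|)) / Real.log lam)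

/-- Expected relaxed iteration count over the two tasks. -/
noncomputable def Eeps (p ε c1 c2 μ1 μ2 l1 l2 ω : ℝ) : ℝ :=
  p * Leps ε c1 μ1 l1 ω + (1 - p) * Leps ε c2 μ2 l2 ω

/-- `ω_(ε,1) = 1/μ1 − ε/(c1·μ1)`. -/
noncomputable def omegaE1 (ε c1 μ1 : ℝ) : ℝ := 1 / μ1 - ε / (c1 * μ1)

/-- `ω_(ε,2) = 1/μ2 + ε/(c2·μ2)`. -/
noncomputable def omegaE2 (ε c2 μ2 : ℝ) : ℝ := 1 / μ2 + ε / (c2 * μ2)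

/-- Threshold probability `p_ε`. -/
noncomputable def pEps (ε c1 c2 μ1 μ2 l1 l2 : ℝ) : ℝ :=
  Leps ε c2 μ2 l2 (omegaE1 ε c1 μ1) /
  (Leps ε c1 μ1 l1 (omegaE2 ε c2 μ2) + Leps ε c2 μ2 l2 (omegaE1 ε c1 μ1))

/-- Limiting threshold probability `p_0`. -/
noncomputable def pZero (l1 l2 : ℝ) : ℝ :=
  Real.log l1 / (Real.log l1 + Real.log l2)

lemma Leps_nonneg (ε c μ lam ω : ℝ) : 0 ≤ Leps ε c μ lam ω := by
  unfold Leps; split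
  · exact le_refl 0
  · exact le_max_left _ _

lemma Leps_pos_val {ε c lam : ℝ} (hε : 0 < ε) (hc : 0 < c)
    (hlam : Real.log lam < 0) {μ ω : ℝ} (h : ε / c < ω * μ - 1) :
    Leps ε c μ lam ω = Real.log (ε / (c * (ω * μ - 1))) / Real.log lam := by
  have ht : 0 < ω * μ - 1 := lt_trans (by positivity) h
  have hne : ω * μ ≠ 1 := by intro h'; rw [h'] at ht; simp at ht
  unfold Leps
  rw [if_neg hne, abs_of_pos ht, max_eq_right]
  apply le_of_lt
  apply div_pos_of_neg_of_neg _ hlam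
  apply Real.log_neg (by positivity)
  rw [div_lt_one (by positivity)]
  have := (div_lt_iff₀ hc).mp h
  nlinarith

lemma Leps_strict {ε c lam : ℝ} (hε : 0 < ε) (hc : 0 < c)
    (hlam : Real.log lam < 0) {μ ω ω' : ℝ} (h : ε / c < ω * μ - 1)
    (hlt : ω * μ < ω' * μ) :
    Leps ε c μ lam ω < Leps ε c μ lam ω' := by
  have ht : 0 < ω * μ - 1 := lt_trans (by positivity) h
  have h' : ε / c < ω' * μ - 1 := by linarith
  rw [Leps_pos_val hε hc hlam h, Leps_pos_val hε hc hlam h']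
  have ht' : 0 < ω' * μ - 1 := lt_trans (by positivity) h'
  apply div_lt_div_of_neg_of_lt hlam
  apply Real.log_lt_log (div_pos hε (mul_pos hc ht'))
  apply div_lt_div_of_pos_left hε (mul_pos hc ht)
  nlinarith

lemma Leps_eq_zero {ε c lam : ℝ} (hε : 0 < ε) (hc : 0 < c)
    (hlam : Real.log lam < 0) {μ ω : ℝ} (h : |ω * μ - 1| ≤ ε / c) :
    Leps ε c μ lam ω = 0 := by
  unfold Leps; split
  · rfl
  · rename_i hne
    have habs : 0 < |ω * μ - 1| := abs_pos.mpr (sub_ne_zero.mpr hne)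
    rw [max_eq_left]
    apply div_nonpos_of_nonneg_of_nonpos _ hlam.le
    apply Real.log_nonneg
    rw [le_div_iff₀ (by positivity)]
    have := (le_div_iff₀ hc).mp h
    nlinarith

lemma Leps_le {ε c lam : ℝ} (hε : 0 < ε) (hc : 0 < c)
    (hlam : Real.log lam < 0) {μ ω ω' : ℝ} (hω : -(ε / c) ≤ ω * μ - 1)
    (hle : ω * μ ≤ ω' * μ) :
    Leps ε c μ lam ω ≤ Leps ε c μ lam ω' := by
  rcases le_or_gt (ω' * μ - 1) (ε / c) with h' | h'
  · rw [Leps_eq_zero hε hc hlam (abs_le.mpr ⟨by linarith, by linarith⟩)]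
    exact Leps_nonneg _ _ _ _ _
  · rcases le_or_gt (ω * μ - 1) (ε / c) with h | h
    · rw [Leps_eq_zero hε hc hlam (abs_le.mpr ⟨by linarith, h⟩)]
      exact Leps_nonneg _ _ _ _ _
    · rcases eq_or_lt_of_le hle with heq | hlt
      · rw [Leps_pos_val hε hc hlam h, Leps_pos_val hε hc hlam h', heq]
      · exact (Leps_strict hε hc hlam h hlt).le

/-- For `0 < ε < c1·c2·(μ2−μ1)/(c1·μ1+c2·μ2)`, the expected iteration count `E_ε`
is strictly increasing on `[ω_(ε,1), ∞)`. -/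
theorem Eeps_strictMono_right (μ1 μ2 l1 l2 c1 c2 p : ℝ)
    (hμ1 : 0 < μ1) (hμ12 : μ1 < μ2) (hμ2 : μ2 < 2)
    (hl1 : l1 = 1 - μ1 / 2) (hl2 : l2 = 1 - μ2 / 2)
    (hc1 : 0 < c1) (hc2 : 0 < c2) (hp0 : 0 < p) (hp1 : p < 1)
    (ε : ℝ) (hε : 0 < ε)
    (hεlt : ε < c1 * c2 * (μ2 - μ1) / (c1 * μ1 + c2 * μ2)) :
    ∀ ω ω' : ℝ, omegaE1 ε c1 μ1 ≤ ω → ω < ω' →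
      Eeps p ε c1 c2 μ1 μ2 l1 l2 ω < Eeps p ε c1 c2 μ1 μ2 l1 l2 ω' := by
  intro ω ω' hω hlt
  have hμ2pos : 0 < μ2 := lt_trans hμ1 hμ12
  have hl1' : Real.log l1 < 0 := by
    apply Real.log_neg <;> rw [hl1] <;> linarith
  have hl2' : Real.log l2 < 0 := by
    apply Real.log_neg <;> rw [hl2] <;> linarith
  have hden : 0 < c1 * μ1 + c2 * μ2 := by positivity
  have key : ε * (c1 * μ1 + c2 * μ2) < c1 * c2 * (μ2 - μ1) :=
    (lt_div_iff₀ hden).mp hεlt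
  have hμ1' : μ1 ≠ 0 := hμ1.ne'
  have hc1' : c1 ≠ 0 := hc1.ne'
  have hc2' : c2 ≠ 0 := hc2.ne'
  have hrw : omegaE1 ε c1 μ1 * μ2 - 1 - ε / c2 =
      (c1 * c2 * (μ2 - μ1) - ε * (c1 * μ1 + c2 * μ2)) / (c1 * μ1 * c2) := by
    rw [omegaE1]; field_simp; ring
  have hω0μ2 : ε / c2 < omegaE1 ε c1 μ1 * μ2 - 1 := by
    have hpos : 0 < omegaE1 ε c1 μ1 * μ2 - 1 - ε / c2 := by
      rw [hrw]; exact div_pos (by linarith) (by positivity)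
    linarith
  have hωμ2 : ε / c2 < ω * μ2 - 1 := by
    have := mul_le_mul_of_nonneg_right hω hμ2pos.le
    linarith
  have hL2 := Leps_strict hε hc2 hl2' hωμ2 (mul_lt_mul_of_pos_right hlt hμ2pos)
  have hω0μ1 : omegaE1 ε c1 μ1 * μ1 = 1 - ε / c1 := by
    rw [omegaE1]; field_simp
  have hωμ1 : -(ε / c1) ≤ ω * μ1 - 1 := by
    have := mul_le_mul_of_nonneg_right hω hμ1.le
    rw [hω0μ1] at this; linarith
  have hL1 := Leps_le hε hc1 hl1' hωμ1 (mul_le_mul_of_nonneg_right hlt.le hμ1.le)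
  unfold Eeps
  have h1 := mul_le_mul_of_nonneg_left hL1 hp0.le
  have h2 := mul_lt_mul_of_pos_left hL2 (by linarith : (0:ℝ) < 1 - p)
  linarith
end

section
/- For every c > 0, every ε > 0, and every δ ≥ ε, there exist constants c1 > 0, c2 > 0 and a probability p ∈ (0, 1) with δ < c1·c2·(μ2 − μ1)/(c1·μ1 + c2·μ2) and p < p_δ (so the minimizer of E_δ is ω_(δ,2)) such that for every real m ≥ 0 one has E_ε(ω_m) > c·E_ε(ω_(δ,2)); that is, minimizing the solution-error loss can perform arbitrarily worse than minimizing the iteration count at training tolerance δ. -/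
/-- Minimizer of the expected `m`-step solution error in the two-task Jacobi setting. -/
noncomputable def omegaM (p c1 c2 μ1 μ2 l1 l2 m : ℝ) : ℝ :=
  (p * c1 ^ 2 * μ1 * l1 ^ (2 * m) + (1 - p) * c2 ^ 2 * μ2 * l2 ^ (2 * m)) /
  (p * c1 ^ 2 * μ1 ^ 2 * l1 ^ (2 * m) + (1 - p) * c2 ^ 2 * μ2 ^ 2 * l2 ^ (2 * m))

lemma Leps_eq (ε c μ lam ω : ℝ) (hω : ω * μ ≠ 1) (hε : 0 < ε) (hc : 0 < c) :
    Leps ε c μ lam ω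
      = max 0 ((Real.log (c * |ω * μ - 1|) - Real.log ε) / (-Real.log lam)) := by
  have hX : 0 < c * |ω * μ - 1| := mul_pos hc (abs_pos.mpr (sub_ne_zero.mpr hω))
  unfold Leps
  rw [if_neg hω, Real.log_div (ne_of_gt hε) (ne_of_gt hX), div_neg, ← neg_div, neg_sub]

set_option maxHeartbeats 1000000 in
/-- Minimizing the solution-error loss can perform arbitrarily worse than
minimizing the iteration count at training tolerance `δ`. -/
theorem Eeps_omegaM_arbitrarily_worse (μ1 μ2 l1 l2 : ℝ)
    (hμ1 : 0 < μ1) (hμ12 : μ1 < μ2) (hμ2 : μ2 < 2)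
    (hl1 : l1 = 1 - μ1 / 2) (hl2 : l2 = 1 - μ2 / 2)
    (c ε δ : ℝ) (hc : 0 < c) (hε : 0 < ε) (hδ : ε ≤ δ) :
    ∃ c1 c2 p : ℝ, 0 < c1 ∧ 0 < c2 ∧ 0 < p ∧ p < 1 ∧
      δ < c1 * c2 * (μ2 - μ1) / (c1 * μ1 + c2 * μ2) ∧
      p < pEps δ c1 c2 μ1 μ2 l1 l2 ∧
      ∀ m : ℝ, 0 ≤ m →
        Eeps p ε c1 c2 μ1 μ2 l1 l2 (omegaM p c1 c2 μ1 μ2 l1 l2 m) >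
          c * Eeps p ε c1 c2 μ1 μ2 l1 l2 (omegaE2 δ c2 μ2) := by
  have h2 : 0 < μ2 := hμ1.trans hμ12
  have h21 : 0 < μ2 - μ1 := by linarith
  have hδ0 : 0 < δ := lt_of_lt_of_le hε hδ
  have hl1pos : 0 < l1 := by rw [hl1]; linarith
  have hl1lt : l1 < 1 := by rw [hl1]; linarith
  have hl2pos : 0 < l2 := by rw [hl2]; linarith
  have hl2lt : l2 < 1 := by rw [hl2]; linarith
  have hl21 : l2 ≤ l1 := by rw [hl1, hl2]; linarith
  set L1 : ℝ := -Real.log l1 with hL1def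
  set L2 : ℝ := -Real.log l2 with hL2def
  have hL1 : 0 < L1 := neg_pos.mpr (Real.log_neg hl1pos hl1lt)
  have hL2 : 0 < L2 := neg_pos.mpr (Real.log_neg hl2pos hl2lt)
  set x : ℝ := L1 / (2 * (1 + c) * L2) with hxdef
  have hx : 0 < x := by positivity
  have h1x : (0:ℝ) < 1 + x := by positivity
  set p : ℝ := x / (1 + x) with hpdef
  have hp0 : 0 < p := by positivity
  have hp1 : p < 1 := by rw [hpdef, div_lt_one h1x]; linarith
  have hp1' : 0 < 1 - p := by linarith
  have h1p : 1 - p = 1 / (1 + x) := by rw [hpdef]; field_simp; ring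
  have hxL : x * (2 * (1 + c) * L2) = L1 := by rw [hxdef]; field_simp
  have hcoef : c * p * L2 < (1 - p) * L1 := by
    rw [h1p, hpdef, show c * (x / (1+x)) * L2 = (c*x*L2)/(1+x) from by ring,
      show 1/(1+x) * L1 = L1/(1+x) from by ring]
    gcongr
    nlinarith [mul_pos hx hL2, mul_pos (mul_pos hc hx) hL2]
  have hcoef' : p * L2 < (1 - p) * L1 := by
    rw [h1p, hpdef, show x / (1+x) * L2 = (x*L2)/(1+x) from by ring,
      show 1/(1+x) * L1 = L1/(1+x) from by ring]
    gcongr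
    nlinarith [mul_pos hx hL2, mul_pos (mul_pos hc hx) hL2]
  -- constants
  set Q : ℝ := p * μ1 ^ 2 + (1 - p) * μ2 ^ 2 with hQdef
  have hQ : 0 < Q := add_pos (mul_pos hp0 (pow_pos hμ1 2)) (mul_pos hp1' (pow_pos h2 2))
  set G : ℝ := p * μ1 * (μ2 - μ1) / Q with hGdef
  have hG : 0 < G := div_pos (mul_pos (mul_pos hp0 hμ1) h21) hQ
  set Z0 : ℝ := (μ2 - μ1) / (2 * μ1) with hZ0def
  have hZ0 : 0 < Z0 := div_pos h21 (by linarith)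
  -- thresholds
  set α1 : ℝ := (1 - p) * L1 - c * p * L2 with hα1def
  have hα1 : 0 < α1 := by rw [hα1def]; linarith
  set β1 : ℝ := (1 - p) * L1 * (Real.log ε - Real.log G) - c * p * L2 * Real.log ε
      + c * (1 - p) * L1 * (Real.log δ - Real.log ε) with hβ1def
  set α2 : ℝ := (1 - p) * L1 - p * L2 with hα2def
  have hα2 : 0 < α2 := by rw [hα2def]; linarith
  set β2 : ℝ := (1 - p) * L1 * (Real.log δ - Real.log Z0) - p * L2 * Real.log δ with hβ2def
  set K : ℝ := max (β1 / α1) (β2 / α2) with hKdef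
  set M : ℝ := 1 + δ * (μ1 + μ2) / (μ2 - μ1) + δ * μ1 / (μ2 - μ1)
      + 2 * δ * μ2 / (μ2 - μ1) + ε + δ with hMdef
  have hMa : 0 ≤ δ * (μ1 + μ2) / (μ2 - μ1) := div_nonneg (by positivity) h21.le
  have hMb : 0 ≤ δ * μ1 / (μ2 - μ1) := div_nonneg (by positivity) h21.le
  have hMc : 0 ≤ 2 * δ * μ2 / (μ2 - μ1) := div_nonneg (by positivity) h21.le
  obtain ⟨t, htlog, htM⟩ : ∃ t : ℝ, K + 1 ≤ Real.log t ∧ M ≤ t := by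
    refine ⟨max (Real.exp (K + 1)) M, ?_, le_max_right _ _⟩
    calc K + 1 = Real.log (Real.exp (K + 1)) := (Real.log_exp _).symm
    _ ≤ Real.log (max (Real.exp (K + 1)) M) :=
        Real.log_le_log (Real.exp_pos _) (le_max_left _ _)
  have ht0 : 0 < t := by
    have : (1:ℝ) ≤ M := by rw [hMdef]; linarith
    linarith
  have htε : ε < t := by rw [hMdef] at htM; linarith
  have htδ : δ < t := by rw [hMdef] at htM; linarith
  have ht1 : δ * (μ1 + μ2) / (μ2 - μ1) < t := by rw [hMdef] at htM; linarith
  have ht2 : δ * μ1 / (μ2 - μ1) < t := by rw [hMdef] at htM; linarith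
  have ht3 : 2 * δ * μ2 / (μ2 - μ1) ≤ t := by rw [hMdef] at htM; linarith
  have hlogt1 : β1 < α1 * Real.log t := by
    have h1 : β1 / α1 < Real.log t :=
      lt_of_le_of_lt (le_max_left _ _) (by linarith)
    rw [div_lt_iff₀ hα1] at h1; linarith
  have hlogt2 : β2 < α2 * Real.log t := by
    have h1 : β2 / α2 < Real.log t :=
      lt_of_le_of_lt (le_max_right _ _) (by linarith)
    rw [div_lt_iff₀ hα2] at h1; linarith
  have hlogδt : Real.log δ ≤ Real.log t := Real.log_le_log hδ0 htδ.le
  have hlogεt : Real.log ε ≤ Real.log t := Real.log_le_log hε htε.le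
  have hlogεδ : Real.log ε ≤ Real.log δ := Real.log_le_log hε hδ
  -- facts about omegaE2 δ t μ2
  have hω2μ1 : omegaE2 δ t μ2 * μ1 = (t * μ1 + δ * μ1) / (t * μ2) := by
    unfold omegaE2; field_simp
  have hW1 : omegaE2 δ t μ2 * μ1 < 1 := by
    rw [hω2μ1, div_lt_one (mul_pos ht0 h2)]
    rw [div_lt_iff₀ h21] at ht2
    linarith only [ht2]
  have hW0 : 0 < omegaE2 δ t μ2 * μ1 := by
    rw [hω2μ1]
    exact div_pos (by linarith only [mul_pos ht0 hμ1, mul_pos hδ0 hμ1]) (mul_pos ht0 h2)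
  have habs1 : |omegaE2 δ t μ2 * μ1 - 1| = 1 - omegaE2 δ t μ2 * μ1 := by
    rw [abs_of_neg (by linarith only [hW1]), neg_sub]
  have hA_ub : ∀ η : ℝ, 0 < η → η ≤ t →
      Leps η t μ1 l1 (omegaE2 δ t μ2) ≤ (Real.log t - Real.log η) / L1 := by
    intro η hη hηt
    have hlog : Real.log η ≤ Real.log t := Real.log_le_log hη hηt
    rw [Leps_eq _ _ _ _ _ (ne_of_lt hW1) hη ht0, habs1, ← hL1def]
    apply max_le (div_nonneg (by linarith only [hlog]) hL1.le)
    refine (div_le_div_iff_of_pos_right hL1).mpr (sub_le_sub_right ?_ _)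
    exact Real.log_le_log (mul_pos ht0 (by linarith only [hW1]))
      (by linarith only [mul_pos ht0 hW0])
  -- facts about omegaE1 δ t μ1
  have hω1μ2 : omegaE1 δ t μ1 * μ2 = (t - δ) * μ2 / (t * μ1) := by
    unfold omegaE1; field_simp
  have h5 : 2 * δ * μ2 ≤ t * (μ2 - μ1) := by
    rw [div_le_iff₀ h21] at ht3; linarith only [ht3]
  have hZge : Z0 + 1 ≤ omegaE1 δ t μ1 * μ2 := by
    rw [hω1μ2, le_div_iff₀ (mul_pos ht0 hμ1)]
    have he : (Z0 + 1) * (t * μ1) = t * (μ2 - μ1) / 2 + t * μ1 := by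
      rw [hZ0def]; field_simp
    rw [he]; linarith only [h5]
  have hZpos : 0 < omegaE1 δ t μ1 * μ2 - 1 := by linarith only [hZge, hZ0]
  have habs2 : |omegaE1 δ t μ1 * μ2 - 1| = omegaE1 δ t μ1 * μ2 - 1 :=
    abs_of_pos hZpos
  have hL12 : 0 < L1 * L2 := mul_pos hL1 hL2
  refine ⟨t, t, p, ht0, ht0, hp0, hp1, ?_, ?_, ?_⟩
  · -- δ < t*t*(μ2-μ1)/(t*μ1+t*μ2)
    have he : t * t * (μ2 - μ1) / (t * μ1 + t * μ2) = t * (μ2 - μ1) / (μ1 + μ2) := by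
      rw [show t * μ1 + t * μ2 = t * (μ1 + μ2) by ring,
        show t * t * (μ2 - μ1) = t * (t * (μ2 - μ1)) by ring,
        mul_div_mul_left _ _ (ne_of_gt ht0)]
    rw [he, lt_div_iff₀ (add_pos hμ1 h2)]
    rw [div_lt_iff₀ h21] at ht1
    linarith only [ht1]
  · -- p < pEps
    have hBlb : (Real.log t + Real.log Z0 - Real.log δ) / L2
        ≤ Leps δ t μ2 l2 (omegaE1 δ t μ1) := by
      rw [Leps_eq _ _ _ _ _ (ne_of_gt (by linarith only [hZpos] :
            1 < omegaE1 δ t μ1 * μ2)) hδ0 ht0, habs2, ← hL2def]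
      refine le_max_of_le_right ((div_le_div_iff_of_pos_right hL2).mpr ?_)
      rw [Real.log_mul ht0.ne' (ne_of_gt hZpos)]
      have h6 := Real.log_le_log hZ0 (by linarith only [hZge] :
        Z0 ≤ omegaE1 δ t μ1 * μ2 - 1)
      linarith only [h6]
    have hp2 : p * ((Real.log t - Real.log δ) / L1)
        < (1 - p) * ((Real.log t + Real.log Z0 - Real.log δ) / L2) := by
      rw [show p * ((Real.log t - Real.log δ) / L1)
            = (p * (Real.log t - Real.log δ) * L2) / (L1 * L2) by
          field_simp,
        show (1 - p) * ((Real.log t + Real.log Z0 - Real.log δ) / L2)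
            = ((1 - p) * (Real.log t + Real.log Z0 - Real.log δ) * L1) / (L1 * L2) by
          field_simp]
      refine (div_lt_div_iff_of_pos_right hL12).mpr ?_
      rw [hβ2def, hα2def] at hlogt2
      linarith only [hlogt2]
    have hAnn : 0 ≤ Leps δ t μ1 l1 (omegaE2 δ t μ2) := Leps_nonneg _ _ _ _ _
    have hAub : Leps δ t μ1 l1 (omegaE2 δ t μ2) ≤ (Real.log t - Real.log δ) / L1 :=
      hA_ub δ hδ0 htδ.le
    have hpAnn : 0 ≤ p * ((Real.log t - Real.log δ) / L1) :=
      mul_nonneg hp0.le (div_nonneg (by linarith only [hlogδt]) hL1.le)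
    have hBlb0 : 0 < (Real.log t + Real.log Z0 - Real.log δ) / L2 := by
      nlinarith only [hp2, hpAnn, hp1']
    have hBpos : 0 < Leps δ t μ2 l2 (omegaE1 δ t μ1) :=
      lt_of_lt_of_le hBlb0 hBlb
    rw [pEps, lt_div_iff₀ (by linarith only [hAnn, hBpos])]
    have h6 : p * Leps δ t μ1 l1 (omegaE2 δ t μ2)
        ≤ p * ((Real.log t - Real.log δ) / L1) :=
      mul_le_mul_of_nonneg_left hAub hp0.le
    have h7 : (1 - p) * ((Real.log t + Real.log Z0 - Real.log δ) / L2)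
        ≤ (1 - p) * Leps δ t μ2 l2 (omegaE1 δ t μ1) :=
      mul_le_mul_of_nonneg_left hBlb hp1'.le
    linarith only [h6, h7, hp2]
  · -- main goal
    intro m hm
    -- value of Leps ε t μ2 l2 at omegaE2 δ t μ2
    have hω2μ2 : omegaE2 δ t μ2 * μ2 = 1 + δ / t := by
      unfold omegaE2; field_simp
    have hδt : 0 < δ / t := div_pos hδ0 ht0
    have hR2 : Leps ε t μ2 l2 (omegaE2 δ t μ2) = (Real.log δ - Real.log ε) / L2 := by
      rw [Leps_eq _ _ _ _ _ (by rw [hω2μ2]; linarith only [hδt]) hε ht0, hω2μ2,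
        show (1 : ℝ) + δ / t - 1 = δ / t by ring, abs_of_pos hδt,
        show t * (δ / t) = δ by field_simp, ← hL2def]
      exact max_eq_right (div_nonneg (by linarith only [hlogεδ]) hL2.le)
    have hR1 : Leps ε t μ1 l1 (omegaE2 δ t μ2) ≤ (Real.log t - Real.log ε) / L1 :=
      hA_ub ε hε htε.le
    -- the omegaM side
    have hrp1 : 0 < l1 ^ (2 * m) := Real.rpow_pos_of_pos hl1pos _
    have hrp2 : 0 < l2 ^ (2 * m) := Real.rpow_pos_of_pos hl2pos _
    have hrp : l2 ^ (2 * m) ≤ l1 ^ (2 * m) :=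
      Real.rpow_le_rpow hl2pos.le hl21 (by linarith only [hm])
    have hD : 0 < p * t ^ 2 * μ1 ^ 2 * l1 ^ (2 * m)
        + (1 - p) * t ^ 2 * μ2 ^ 2 * l2 ^ (2 * m) :=
      add_pos (mul_pos (mul_pos (mul_pos hp0 (pow_pos ht0 2)) (pow_pos hμ1 2)) hrp1)
        (mul_pos (mul_pos (mul_pos hp1' (pow_pos ht0 2)) (pow_pos h2 2)) hrp2)
    have hxm : omegaM p t t μ1 μ2 l1 l2 m * μ2 - 1
        = p * t ^ 2 * l1 ^ (2 * m) * μ1 * (μ2 - μ1)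
          / (p * t ^ 2 * μ1 ^ 2 * l1 ^ (2 * m) + (1 - p) * t ^ 2 * μ2 ^ 2 * l2 ^ (2 * m)) := by
      unfold omegaM
      field_simp
      ring
    have hGxm : G ≤ omegaM p t t μ1 μ2 l1 l2 m * μ2 - 1 := by
      rw [hxm, hGdef, div_le_div_iff₀ hQ hD, hQdef]
      have hkey0 : 0 ≤ μ1 * (μ2 - μ1) * (p * (1 - p) * t ^ 2 * μ2 ^ 2
          * (l1 ^ (2 * m) - l2 ^ (2 * m))) :=
        mul_nonneg (mul_nonneg hμ1.le h21.le)
          (mul_nonneg (mul_nonneg (mul_nonneg (mul_nonneg hp0.le hp1'.le)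
            (by positivity)) (by positivity)) (by linarith only [hrp]))
      linarith only [hkey0]
    have hxmpos : 0 < omegaM p t t μ1 μ2 l1 l2 m * μ2 - 1 :=
      lt_of_lt_of_le hG hGxm
    have hL2lb : (Real.log t + Real.log G - Real.log ε) / L2
        ≤ Leps ε t μ2 l2 (omegaM p t t μ1 μ2 l1 l2 m) := by
      rw [Leps_eq _ _ _ _ _ (ne_of_gt (by linarith only [hxmpos] :
            1 < omegaM p t t μ1 μ2 l1 l2 m * μ2)) hε ht0,
        abs_of_pos hxmpos, ← hL2def]
      refine le_max_of_le_right ((div_le_div_iff_of_pos_right hL2).mpr ?_)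
      rw [Real.log_mul ht0.ne' (ne_of_gt hxmpos)]
      have h6 := Real.log_le_log hG hGxm
      linarith only [h6]
    have hEm : (1 - p) * ((Real.log t + Real.log G - Real.log ε) / L2)
        ≤ Eeps p ε t t μ1 μ2 l1 l2 (omegaM p t t μ1 μ2 l1 l2 m) := by
      unfold Eeps
      have h6 := mul_le_mul_of_nonneg_left hL2lb hp1'.le
      have h7 := mul_nonneg hp0.le (Leps_nonneg ε t μ1 l1 (omegaM p t t μ1 μ2 l1 l2 m))
      linarith only [h6, h7]
    have hRub : Eeps p ε t t μ1 μ2 l1 l2 (omegaE2 δ t μ2)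
        ≤ p * ((Real.log t - Real.log ε) / L1)
          + (1 - p) * ((Real.log δ - Real.log ε) / L2) := by
      unfold Eeps
      rw [hR2]
      have h6 := mul_le_mul_of_nonneg_left hR1 hp0.le
      linarith only [h6]
    have hmid : c * (p * ((Real.log t - Real.log ε) / L1)
          + (1 - p) * ((Real.log δ - Real.log ε) / L2))
        < (1 - p) * ((Real.log t + Real.log G - Real.log ε) / L2) := by
      rw [show c * (p * ((Real.log t - Real.log ε) / L1)
            + (1 - p) * ((Real.log δ - Real.log ε) / L2))
          = (c * (p * (Real.log t - Real.log ε) * L2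
              + (1 - p) * (Real.log δ - Real.log ε) * L1)) / (L1 * L2) by
          field_simp,
        show (1 - p) * ((Real.log t + Real.log G - Real.log ε) / L2)
          = ((1 - p) * (Real.log t + Real.log G - Real.log ε) * L1) / (L1 * L2) by
          field_simp]
      refine (div_lt_div_iff_of_pos_right hL12).mpr ?_
      rw [hβ1def, hα1def] at hlogt1
      linarith only [hlogt1]
    have hfin := mul_le_mul_of_nonneg_left hRub hc.le
    have := lt_of_le_of_lt hfin (lt_of_lt_of_le hmid hEm)
    exact this
end
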